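/- arXiv:2303.06515 — 3 statements merged into one kernel-verified Lean document; each statement's English description precedes it below -/
import Mathlib

section
/- Let H be a real Hilbert space, let F : H → ℝ, let u, uⁿ ∈ H, and let g ∈ H be a subgradient of F at uⁿ in the sense that F(uⁿ) − F(u) ≤ ⟨uⁿ − u, g⟩. Let η > 0, ε ≥ 0, let g̃ ∈ H satisfy ‖g − g̃‖ ≤ ε/η, and set u^{n+1} = uⁿ − η·g̃. Then F(uⁿ) − F(u) ≤ (‖uⁿ − u‖² − ‖u^{n+1} − u‖²)/(2η) + η‖g‖² + (ε/η)‖uⁿ − u‖ + ε²/η. -/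
/-- Per-step descent inequality for projected functional stochastic gradient descent:
if `g` is a subgradient of `F` at `uⁿ`, `‖g - g̃‖ ≤ ε/η` and `u^{n+1} = uⁿ - η g̃`, then
`F(uⁿ) - F(u) ≤ (‖uⁿ - u‖² - ‖u^{n+1} - u‖²)/(2η) + η‖g‖² + (ε/η)‖uⁿ - u‖ + ε²/η`. -/
theorem per_step_descent_bound
    {H : Type*} [NormedAddCommGroup H] [InnerProductSpace ℝ H] [CompleteSpace H]
    (F : H → ℝ) (u un : H) (g : H)
    (hsubgrad : F un - F u ≤ inner ℝ (un - u) g)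
    (η ε : ℝ) (hη : 0 < η) (hε : 0 ≤ ε)
    (gtilde : H) (hgtilde : ‖g - gtilde‖ ≤ ε / η)
    (unext : H) (hunext : unext = un - η • gtilde) :
    F un - F u ≤ (‖un - u‖ ^ 2 - ‖unext - u‖ ^ 2) / (2 * η)
      + η * ‖g‖ ^ 2 + (ε / η) * ‖un - u‖ + ε ^ 2 / η := by
  set a := un - u with ha'
  set δ := ε / η with hδ'
  have hδ : (0:ℝ) ≤ δ := div_nonneg hε hη.le
  have ha : unext - u = a - η • gtilde := by rw [hunext, ha']; abel
  have hexp : ‖unext - u‖ ^ 2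
      = ‖a‖ ^ 2 - 2 * η * inner ℝ a gtilde + η ^ 2 * ‖gtilde‖ ^ 2 := by
    rw [ha, norm_sub_sq_real, real_inner_smul_right, norm_smul,
      Real.norm_eq_abs, mul_pow, sq_abs]
    ring
  have h1 : (inner ℝ a (g - gtilde) : ℝ) ≤ ‖a‖ * δ :=
    le_trans (real_inner_le_norm a (g - gtilde))
      (mul_le_mul_of_nonneg_left hgtilde (norm_nonneg a))
  have h2 : (inner ℝ a (g - gtilde) : ℝ) = inner ℝ a g - inner ℝ a gtilde :=
    inner_sub_right a g gtilde
  have h3 : ‖gtilde‖ ≤ ‖g‖ + δ := by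
    have := norm_sub_norm_le gtilde g
    rw [norm_sub_rev gtilde g] at this
    linarith
  have hε2 : ε ^ 2 / η = η * δ ^ 2 := by
    rw [hδ']; field_simp
  have key : ((F un - F u) - (η * ‖g‖ ^ 2 + δ * ‖a‖ + η * δ ^ 2)) * (2 * η)
      ≤ ‖a‖ ^ 2 - ‖unext - u‖ ^ 2 := by
    rw [hexp]
    nlinarith [sq_nonneg (‖g‖ - δ), mul_le_mul h3 h3 (norm_nonneg gtilde)
      (by positivity : (0:ℝ) ≤ ‖g‖ + δ), sq_nonneg η, hη, norm_nonneg gtilde,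
      norm_nonneg g, mul_pos hη hη]
  have := (le_div_iff₀ (by positivity : (0:ℝ) < 2 * η)).mpr key
  rw [hε2]
  linarith
end

section
/- Let H be a real Hilbert space, let N ≥ 1, let u ∈ H, and let u⁰, …, u^N ∈ H. For n = 0, …, N−1, let F_n : H → ℝ, let g_n ∈ H satisfy the subgradient inequality F_n(uⁿ) − F_n(u) ≤ ⟨uⁿ − u, g_n⟩ and the bound ‖g_n‖ ≤ G, let η_n > 0 and ε_n ≥ 0, let g̃_n ∈ H satisfy ‖g_n − g̃_n‖ ≤ ε_n/η_n, let u^{n+1} = uⁿ − η_n·g̃_n, and suppose ‖uⁿ − u‖ ≤ R. Then ∑_{n=0}^{N−1} η_n·(F_n(uⁿ) − F_n(u)) ≤ (1/2)‖u⁰ − u‖² + R·∑_{n=0}^{N−1} ε_n + G²·∑_{n=0}^{N−1} η_n² + ∑_{n=0}^{N−1} ε_n². -/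
/-- Telescoped regret bound underlying the convergence rate lemma: summing the per-step
descent inequalities over `n = 0, …, N-1` yields
`∑ η_n (F_n(uⁿ) - F_n(u)) ≤ (1/2)‖u⁰ - u‖² + R ∑ ε_n + G² ∑ η_n² + ∑ ε_n²`. -/
theorem telescoped_regret_bound
    {H : Type*} [NormedAddCommGroup H] [InnerProductSpace ℝ H] [CompleteSpace H]
    (N : ℕ) (hN : 1 ≤ N) (u : H) (useq : ℕ → H)
    (F : ℕ → H → ℝ) (g : ℕ → H) (G R : ℝ)
    (η : ℕ → ℝ) (ε : ℕ → ℝ) (gtilde : ℕ → H)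
    (hsubgrad : ∀ n < N, F n (useq n) - F n u ≤ inner ℝ (useq n - u) (g n))
    (hgbound : ∀ n < N, ‖g n‖ ≤ G)
    (hη : ∀ n < N, 0 < η n) (hε : ∀ n < N, 0 ≤ ε n)
    (hgtilde : ∀ n < N, ‖g n - gtilde n‖ ≤ ε n / η n)
    (hrec : ∀ n < N, useq (n + 1) = useq n - η n • gtilde n)
    (hR : ∀ n < N, ‖useq n - u‖ ≤ R) :
    ∑ n ∈ Finset.range N, η n * (F n (useq n) - F n u) ≤
      (1 / 2) * ‖useq 0 - u‖ ^ 2 + R * ∑ n ∈ Finset.range N, ε n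
        + G ^ 2 * ∑ n ∈ Finset.range N, (η n) ^ 2 + ∑ n ∈ Finset.range N, (ε n) ^ 2 := by
  have hR0 : 0 ≤ R := le_trans (norm_nonneg _) (hR 0 hN)
  -- per-step inequality
  have key : ∀ n < N, η n * (F n (useq n) - F n u) ≤
      (1 / 2) * ‖useq n - u‖ ^ 2 - (1 / 2) * ‖useq (n + 1) - u‖ ^ 2
        + R * ε n + G ^ 2 * (η n) ^ 2 + (ε n) ^ 2 := by
    intro n hn
    have hηn := hη n hn
    have hεn := hε n hn
    set a := useq n - u with ha
    set b := η n • gtilde n with hb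
    have hstep : useq (n + 1) - u = a - b := by
      rw [hrec n hn, sub_right_comm]
    have hnormsq : ‖a - b‖ ^ 2 = ‖a‖ ^ 2 - 2 * inner ℝ a b + ‖b‖ ^ 2 := by
      rw [← real_inner_self_eq_norm_sq, ← real_inner_self_eq_norm_sq,
        ← real_inner_self_eq_norm_sq, inner_sub_sub_self, real_inner_comm b a]
      ring
    have hinner_ab : inner ℝ a b =
        (1 / 2) * ‖a‖ ^ 2 + (1 / 2) * ‖b‖ ^ 2 - (1 / 2) * ‖a - b‖ ^ 2 := by
      rw [hnormsq]; ring
    -- bound on ‖b‖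
    have hbnorm : ‖b‖ ≤ η n * G + ε n := by
      have h1 : ‖gtilde n‖ ≤ G + ε n / η n := by
        calc ‖gtilde n‖ = ‖g n - (g n - gtilde n)‖ := by rw [sub_sub_cancel]
          _ ≤ ‖g n‖ + ‖g n - gtilde n‖ := norm_sub_le _ _
          _ ≤ G + ε n / η n := add_le_add (hgbound n hn) (hgtilde n hn)
      calc ‖b‖ = η n * ‖gtilde n‖ := by
            rw [hb, norm_smul, Real.norm_eq_abs, abs_of_pos hηn]
        _ ≤ η n * (G + ε n / η n) := by
            exact mul_le_mul_of_nonneg_left h1 hηn.le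
        _ = η n * G + ε n := by field_simp
    have hG0 : 0 ≤ G := le_trans (norm_nonneg _) (hgbound n hn)
    have hbsq : (1 / 2) * ‖b‖ ^ 2 ≤ G ^ 2 * (η n) ^ 2 + (ε n) ^ 2 := by
      have h2 : ‖b‖ ^ 2 ≤ (η n * G + ε n) ^ 2 :=
        pow_le_pow_left₀ (norm_nonneg _) hbnorm 2
      nlinarith [sq_nonneg (η n * G - ε n)]
    -- inner product with error term
    have herr : inner ℝ a (η n • (g n - gtilde n)) ≤ R * ε n := by
      calc (inner ℝ a (η n • (g n - gtilde n)) : ℝ)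
          ≤ ‖a‖ * ‖η n • (g n - gtilde n)‖ := real_inner_le_norm _ _
        _ ≤ R * ε n := by
            have : ‖η n • (g n - gtilde n)‖ ≤ ε n := by
              rw [norm_smul, Real.norm_eq_abs, abs_of_pos hηn]
              calc η n * ‖g n - gtilde n‖ ≤ η n * (ε n / η n) :=
                    mul_le_mul_of_nonneg_left (hgtilde n hn) hηn.le
                _ = ε n := by field_simp
            exact mul_le_mul (hR n hn) this (norm_nonneg _) hR0
    have hsplit : η n * (inner ℝ a (g n) : ℝ) =
        inner ℝ a b + inner ℝ a (η n • (g n - gtilde n)) := by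
      rw [hb, inner_smul_right, inner_smul_right, inner_sub_right]; ring
    have hsub : η n * (F n (useq n) - F n u) ≤ η n * inner ℝ a (g n) :=
      mul_le_mul_of_nonneg_left (hsubgrad n hn) hηn.le
    rw [hstep]
    calc η n * (F n (useq n) - F n u)
        ≤ inner ℝ a b + inner ℝ a (η n • (g n - gtilde n)) := by rw [← hsplit]; exact hsub
      _ ≤ ((1 / 2) * ‖a‖ ^ 2 + (1 / 2) * ‖b‖ ^ 2 - (1 / 2) * ‖a - b‖ ^ 2) + R * ε n := by
          rw [hinner_ab]; linarith
      _ ≤ (1 / 2) * ‖a‖ ^ 2 - (1 / 2) * ‖a - b‖ ^ 2 + R * ε n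
            + G ^ 2 * (η n) ^ 2 + (ε n) ^ 2 := by linarith
  -- sum up
  have hsum : ∑ n ∈ Finset.range N, η n * (F n (useq n) - F n u) ≤
      ∑ n ∈ Finset.range N, ((1 / 2) * ‖useq n - u‖ ^ 2
        - (1 / 2) * ‖useq (n + 1) - u‖ ^ 2 + R * ε n + G ^ 2 * (η n) ^ 2 + (ε n) ^ 2) :=
    Finset.sum_le_sum fun n hn => key n (Finset.mem_range.mp hn)
  have htel : ∑ n ∈ Finset.range N, ((1 / 2) * ‖useq n - u‖ ^ 2
      - (1 / 2) * ‖useq (n + 1) - u‖ ^ 2)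
      = (1 / 2) * ‖useq 0 - u‖ ^ 2 - (1 / 2) * ‖useq N - u‖ ^ 2 := by
    have := Finset.sum_range_sub' (fun n => (1 / 2) * ‖useq n - u‖ ^ 2) N
    simpa using this
  calc ∑ n ∈ Finset.range N, η n * (F n (useq n) - F n u)
      ≤ ∑ n ∈ Finset.range N, ((1 / 2) * ‖useq n - u‖ ^ 2
          - (1 / 2) * ‖useq (n + 1) - u‖ ^ 2 + R * ε n + G ^ 2 * (η n) ^ 2 + (ε n) ^ 2) := hsum
    _ = ((1 / 2) * ‖useq 0 - u‖ ^ 2 - (1 / 2) * ‖useq N - u‖ ^ 2)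
          + R * ∑ n ∈ Finset.range N, ε n + G ^ 2 * ∑ n ∈ Finset.range N, (η n) ^ 2
          + ∑ n ∈ Finset.range N, (ε n) ^ 2 := by
        simp only [Finset.sum_add_distrib, htel, Finset.mul_sum]
    _ ≤ _ := by
        have : 0 ≤ (1 / 2) * ‖useq N - u‖ ^ 2 := by positivity
        linarith
end

section
/- Let H be a real Hilbert space, let N ≥ 1, let F : H → ℝ, let u* ∈ H, and let u⁰, …, u^N ∈ H. Fix constants η > 0, P₂ ≥ 0, G ≥ 0, R ≥ 0, and set ε = P₂·η². For n = 0, …, N−1, suppose there is g_n ∈ H with F(uⁿ) − F(u*) ≤ ⟨uⁿ − u*, g_n⟩ and ‖g_n‖ ≤ G, suppose ‖uⁿ − u*‖ ≤ R, and suppose u^{n+1} = uⁿ − η·g̃_n for some g̃_n ∈ H with ‖g_n − g̃_n‖ ≤ ε/η. Then min_{0 ≤ n ≤ N−1} (F(uⁿ) − F(u*)) ≤ ‖u⁰ − u*‖²/(2Nη) + (R·P₂ + G²)·η + P₂²·η³. -/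
/-- Deterministic core of the main convergence theorem: with constant step size `η` and
pruning tolerance `ε = P₂η²`, the best iterate among `u⁰, …, u^{N-1}` satisfies
`min_n (F(uⁿ) - F(u*)) ≤ ‖u⁰ - u*‖²/(2Nη) + (R P₂ + G²) η + P₂² η³`. -/
theorem constant_stepsize_convergence_bound
    {H : Type*} [NormedAddCommGroup H] [InnerProductSpace ℝ H] [CompleteSpace H]
    (N : ℕ) (hN : 1 ≤ N)
    (F : H → ℝ) (ustar : H) (useq : ℕ → H)
    (η P₂ G R ε : ℝ) (hη : 0 < η) (hP₂ : 0 ≤ P₂) (hG : 0 ≤ G) (hR : 0 ≤ R)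
    (hε : ε = P₂ * η ^ 2)
    (g gtilde : ℕ → H)
    (hsubgrad : ∀ n < N, F (useq n) - F ustar ≤ inner ℝ (useq n - ustar) (g n))
    (hgbound : ∀ n < N, ‖g n‖ ≤ G)
    (hRbound : ∀ n < N, ‖useq n - ustar‖ ≤ R)
    (hgtilde : ∀ n < N, ‖g n - gtilde n‖ ≤ ε / η)
    (hrec : ∀ n < N, useq (n + 1) = useq n - η • gtilde n) :
    (Finset.range N).inf' (Finset.nonempty_range_iff.mpr (by omega))
        (fun n => F (useq n) - F ustar) ≤
      ‖useq 0 - ustar‖ ^ 2 / (2 * N * η) + (R * P₂ + G ^ 2) * η + P₂ ^ 2 * η ^ 3 := by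
  set m := (Finset.range N).inf' (Finset.nonempty_range_iff.mpr (by omega))
      (fun n => F (useq n) - F ustar) with hm
  have hmin : ∀ n < N, m ≤ F (useq n) - F ustar := fun n hn =>
    Finset.inf'_le _ (Finset.mem_range.mpr hn)
  have hεη : ε / η = P₂ * η := by rw [hε]; field_simp
  set C : ℝ := 2*R*P₂*η^2 + 2*G^2*η^2 + 2*P₂^2*η^4 with hC
  have key : ∀ n < N, 2*η*m ≤ ‖useq n - ustar‖^2 - ‖useq (n+1) - ustar‖^2 + C := by
    intro n hn
    have h1 : useq (n+1) - ustar = (useq n - ustar) - η • gtilde n := by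
      rw [hrec n hn]; abel
    have h2 : ‖useq (n+1) - ustar‖^2
        = ‖useq n - ustar‖^2 - 2*(η * inner ℝ (useq n - ustar) (gtilde n)) + η^2*‖gtilde n‖^2 := by
      rw [h1, norm_sub_sq_real, real_inner_smul_right, norm_smul, Real.norm_eq_abs,
        abs_of_pos hη]
      ring
    have hip0 : (inner ℝ (useq n - ustar) (g n - gtilde n) : ℝ) ≤ R * (P₂ * η) := by
      calc (inner ℝ (useq n - ustar) (g n - gtilde n) : ℝ)
          ≤ ‖useq n - ustar‖ * ‖g n - gtilde n‖ := real_inner_le_norm _ _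
        _ ≤ R * (P₂ * η) := by
            rw [← hεη]
            exact mul_le_mul (hRbound n hn) (hgtilde n hn) (norm_nonneg _) hR
    have h3 : (inner ℝ (useq n - ustar) (gtilde n) : ℝ)
        = inner ℝ (useq n - ustar) (g n) - inner ℝ (useq n - ustar) (g n - gtilde n) := by
      rw [inner_sub_right]; ring
    have hip : (F (useq n) - F ustar) - R * (P₂ * η)
        ≤ (inner ℝ (useq n - ustar) (gtilde n) : ℝ) := by
      have := hsubgrad n hn
      linarith
    have hgt1 : ‖gtilde n‖ ≤ G + P₂ * η := by
      have : ‖gtilde n‖ ≤ ‖g n‖ + ‖g n - gtilde n‖ := by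
        have h := norm_le_norm_add_norm_sub' (gtilde n) (g n)
        rwa [norm_sub_rev] at h
      calc ‖gtilde n‖ ≤ ‖g n‖ + ‖g n - gtilde n‖ := this
        _ ≤ G + P₂ * η := by
            have := hgtilde n hn
            rw [hεη] at this
            linarith [hgbound n hn]
    have hgt : ‖gtilde n‖^2 ≤ 2*G^2 + 2*(P₂*η)^2 := by
      nlinarith [norm_nonneg (gtilde n), sq_nonneg (G - P₂*η)]
    have hmn := hmin n hn
    nlinarith [mul_le_mul_of_nonneg_left hip (le_of_lt hη),
      mul_le_mul_of_nonneg_left hmn (le_of_lt hη), sq_nonneg η, mul_pos hη hη]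
  have hNpos : (0:ℝ) < N := by exact_mod_cast hN
  have hsum : (N:ℝ) * (2*η*m) ≤ ‖useq 0 - ustar‖^2 + N * C := by
    have hs := Finset.sum_le_sum (fun n hn => key n (Finset.mem_range.mp hn))
    rw [Finset.sum_const, Finset.card_range, nsmul_eq_mul] at hs
    have htel : ∑ n ∈ Finset.range N,
        (‖useq n - ustar‖^2 - ‖useq (n+1) - ustar‖^2 + C)
        = (‖useq 0 - ustar‖^2 - ‖useq N - ustar‖^2) + N * C := by
      rw [Finset.sum_add_distrib, Finset.sum_range_sub' (fun n => ‖useq n - ustar‖^2),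
        Finset.sum_const, Finset.card_range, nsmul_eq_mul]
    rw [htel] at hs
    nlinarith [sq_nonneg ‖useq N - ustar‖]
  have h2Nη : 0 < 2 * (N:ℝ) * η := by positivity
  have hfin : m ≤ (‖useq 0 - ustar‖^2 + N * C) / (2 * N * η) := by
    rw [le_div_iff₀ h2Nη]
    nlinarith [hsum]
  have heq : (‖useq 0 - ustar‖^2 + (N:ℝ) * C) / (2 * N * η)
      = ‖useq 0 - ustar‖^2 / (2 * N * η) + (R * P₂ + G^2) * η + P₂^2 * η^3 := by
    rw [hC]
    field_simp
    ring
  linarith [hfin, heq.le]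
end
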